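/- arXiv:2507.08463 — 5 statements merged into one kernel-verified Lean document; each statement's English description precedes it below -/
import Mathlib

section
/- Let M be a matching in a graph G and let p be an augmenting path for M. Then the symmetric difference of M with the edge set of p (i.e., the result of flipping p) is again a matching in G. -/
variable {V : Type*}

/-- The list of edges of a path given by its list of vertices. -/
def pathEdges (p : List V) : List (Sym2 V) :=
  List.zipWith (fun a b => s(a, b)) p p.tail

/-- `M` is a matching in `G`: a set of edges of `G` no two of which share a vertex. -/
def IsMatching (G : SimpleGraph V) (M : Set (Sym2 V)) : Prop :=
  M ⊆ G.edgeSet ∧ ∀ e ∈ M, ∀ f ∈ M, e ≠ f → ∀ v : V, v ∈ e → v ∉ f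

/-- A vertex is covered by `M` if it is incident with some edge of `M`. -/
def Covered (M : Set (Sym2 V)) (v : V) : Prop :=
  ∃ e ∈ M, v ∈ e

/-- `p` (a list of vertices) is an augmenting path for the matching `M` in `G`:
a simple path whose edges alternate out of/in `M` (starting and ending with a
non-matching edge, so it has an odd number of edges, i.e. an even number of
vertices) and whose endpoints are uncovered by `M`. -/
def IsAugPath (G : SimpleGraph V) (M : Set (Sym2 V)) (p : List V) : Prop :=
  p.Nodup ∧ p.Chain' G.Adj ∧ 2 ≤ p.length ∧ p.length % 2 = 0 ∧
  (∀ (i : ℕ) (h : i < (pathEdges p).length),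
      ((pathEdges p).get ⟨i, h⟩ ∈ M ↔ i % 2 = 1)) ∧
  (∀ v : V, p.head? = some v ∨ p.getLast? = some v → ¬ Covered M v)


lemma pathEdges_length (p : List V) : (pathEdges p).length = p.length - 1 := by
  simp [pathEdges, List.length_zipWith, List.length_tail]

lemma pathEdges_getElem (p : List V) (i : ℕ) (h : i + 1 < p.length) :
    (pathEdges p)[i]'(by rw [pathEdges_length]; omega) = s(p[i], p[i+1]) := by
  simp only [pathEdges, List.getElem_zipWith, List.getElem_tail]

lemma mem_pathEdges_iff (p : List V) (e : Sym2 V) :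
    e ∈ pathEdges p ↔ ∃ i, ∃ h : i + 1 < p.length, e = s(p[i], p[i+1]) := by
  rw [List.mem_iff_getElem]
  constructor
  · rintro ⟨i, hi, rfl⟩
    have hi' : i + 1 < p.length := by rw [pathEdges_length] at hi; omega
    exact ⟨i, hi', pathEdges_getElem p i hi'⟩
  · rintro ⟨i, hi, rfl⟩
    exact ⟨i, by rw [pathEdges_length]; omega, pathEdges_getElem p i hi⟩

/-- Flipping an augmenting path of a matching yields a matching. -/
theorem flip_augPath_isMatching (G : SimpleGraph V) (M : Set (Sym2 V))
    (hM : IsMatching G M) (p : List V) (hp : IsAugPath G M p) :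
    IsMatching G (symmDiff M {e | e ∈ pathEdges p}) := by
  obtain ⟨hnd, hch, hlen, hpar, halt, hunc⟩ := hp
  -- alternation in getElem form
  have halt' : ∀ i (h : i + 1 < p.length), (s(p[i], p[i+1]) ∈ M ↔ i % 2 = 1) := by
    intro i h
    have := halt i (by rw [pathEdges_length]; omega)
    rwa [List.get_eq_getElem, pathEdges_getElem p i h] at this
  have hinj : ∀ i j (hi : i < p.length) (hj : j < p.length), p[i] = p[j] → i = j := by
    intro i j hi hj he
    exact (List.Nodup.getElem_inj_iff hnd).mp he
  have h0 : ¬ Covered M (p[0]'(by omega)) := by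
    apply hunc
    left
    rw [List.head?_eq_getElem?]
    simp [List.getElem?_eq_getElem (by omega : 0 < p.length)]
  have hlast : ¬ Covered M (p[p.length - 1]'(by omega)) := by
    apply hunc
    right
    rw [List.getLast?_eq_getElem?]
    simp [List.getElem?_eq_getElem (by omega : p.length - 1 < p.length)]
  -- key mixed-case fact
  have key : ∀ e ∈ M, e ∉ pathEdges p → ∀ j, ∀ hj : j + 1 < p.length, j % 2 = 0 →
      ∀ v, v ∈ e → v ∉ s(p[j], p[j+1]) := by
    intro e heM heP j hj hjeven v hve hvf
    rw [Sym2.mem_iff] at hvf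
    rcases hvf with rfl | rfl
    · -- v = p[j]
      rcases Nat.eq_zero_or_pos j with rfl | hj0
      · exact h0 ⟨e, heM, hve⟩
      · have hj1 : (j - 1) + 1 < p.length := by omega
        have hgodd : (j - 1) % 2 = 1 := by omega
        have hgM : s(p[j-1], p[j-1+1]) ∈ M := (halt' (j-1) hj1).mpr hgodd
        have hgP : s(p[j-1], p[j-1+1]) ∈ pathEdges p :=
          (mem_pathEdges_iff p _).mpr ⟨j - 1, hj1, rfl⟩
        have hne : e ≠ s(p[j-1], p[j-1+1]) := fun h => heP (h ▸ hgP)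
        apply hM.2 e heM _ hgM hne _ hve
        have hidx : j - 1 + 1 = j := by omega
        rw [Sym2.mem_iff]
        right
        simp only [hidx]
    · -- v = p[j+1]
      rcases eq_or_lt_of_le (by omega : j + 2 ≤ p.length) with hj2 | hj2
      · have : j + 1 = p.length - 1 := by omega
        apply hlast ⟨e, heM, ?_⟩
        convert hve using 2
        omega
      · have hgM : s(p[j+1], p[j+1+1]) ∈ M := (halt' (j+1) hj2).mpr (by omega)
        have hgP : s(p[j+1], p[j+1+1]) ∈ pathEdges p :=
          (mem_pathEdges_iff p _).mpr ⟨j + 1, hj2, rfl⟩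
        have hne : e ≠ s(p[j+1], p[j+1+1]) := fun h => heP (h ▸ hgP)
        exact hM.2 e heM _ hgM hne _ hve (Sym2.mem_iff.mpr (Or.inl rfl))
  constructor
  · -- subset of edge set
    intro e he
    rw [Set.mem_symmDiff] at he
    rcases he with ⟨heM, -⟩ | ⟨heP, -⟩
    · exact hM.1 heM
    · rw [Set.mem_setOf_eq, mem_pathEdges_iff] at heP
      obtain ⟨i, hi, rfl⟩ := heP
      rw [SimpleGraph.mem_edgeSet]
      exact List.isChain_iff_getElem.mp hch i (by omega)
  · -- pairwise disjoint
    intro e heMP f hfMP hne v hve hvf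
    rw [Set.mem_symmDiff] at heMP hfMP
    -- a path edge not in M has even index
    have hPeven : ∀ g : Sym2 V, g ∈ pathEdges p → g ∉ M →
        ∃ j, ∃ hj : j + 1 < p.length, j % 2 = 0 ∧ g = s(p[j], p[j+1]) := by
      intro g hgP hgM
      obtain ⟨j, hj, rfl⟩ := (mem_pathEdges_iff p g).mp hgP
      refine ⟨j, hj, ?_, rfl⟩
      by_contra h
      exact hgM ((halt' j hj).mpr (by omega))
    rcases heMP with ⟨heM, heP⟩ | ⟨heP, heM⟩ <;> rcases hfMP with ⟨hfM, hfP⟩ | ⟨hfP, hfM⟩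
    · exact hM.2 e heM f hfM hne v hve hvf
    · obtain ⟨j, hj, hje, rfl⟩ := hPeven f hfP hfM
      exact key e heM heP j hj hje v hve hvf
    · obtain ⟨j, hj, hje, rfl⟩ := hPeven e heP heM
      exact key f hfM hfP j hj hje v hvf hve
    · obtain ⟨i, hi, hie, rfl⟩ := hPeven e heP heM
      obtain ⟨j, hj, hje, rfl⟩ := hPeven f hfP hfM
      rw [Sym2.mem_iff] at hve hvf
      have hij : i ≠ j := fun h => hne (by subst h; rfl)
      rcases hve with rfl | rfl <;> rcases hvf with h | h
      · exact hij (hinj i j (by omega) (by omega) h)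
      · have := hinj i (j+1) (by omega) (by omega) h; omega
      · have := hinj (i+1) j (by omega) (by omega) h; omega
      · have := hinj (i+1) (j+1) (by omega) (by omega) h; omega
end

section
/- Let (M, +, 0) be a commutative monoid with algebraic preorder ≤. Suppose M satisfies the approximate weak cancellation law: whenever k·α ≤ k·β (k ≥ 1), then for every positive integer m there exist α', α'' with α' + α'' = α, p·α' ≤ q·α for some positive integers p, q with m ≤ p/q, and α'' ≤ β. Then for any α with (n+1)·α ≤ n·α for some n ≥ 1, we have 2·α ≤₀ α, i.e., for every m > 0 there is a decomposition 2·α = γ' + γ'' with p·γ' ≤ q·(2·α) for some p/q ≥ m and γ'' ≤ α. -/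
/-- if a commutative monoid satisfies the approximate weak
cancellation law, then `(n+1)·α ≤ n·α` for some `n ≥ 1` implies `2·α ≤₀ α`:
for every `m > 0` there is a splitting `2·α = γ' + γ''` with `p·γ' ≤ q·(2·α)`
for some positive integers `p, q` with `m ≤ p/q`, and `γ'' ≤ α`. Here `≤` is the
algebraic preorder `x ≤ y ↔ ∃ z, x + z = y`. -/
theorem two_le_zero_of_cancellation {M : Type*} [AddCommMonoid M]
    (hcancel : ∀ (k : ℕ), 1 ≤ k → ∀ α β : M,
      (∃ γ, k • α + γ = k • β) →
      ∀ m : ℕ, 0 < m → ∃ α' α'' : M, α' + α'' = α ∧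
        (∃ p q : ℕ, 0 < p ∧ 0 < q ∧ m * q ≤ p ∧ ∃ γ, p • α' + γ = q • α) ∧
        (∃ γ, α'' + γ = β))
    (α : M) (n : ℕ) (hn : 1 ≤ n)
    (h : ∃ γ, (n + 1) • α + γ = n • α) :
    ∀ m : ℕ, 0 < m → ∃ γ' γ'' : M, γ' + γ'' = 2 • α ∧
      (∃ p q : ℕ, 0 < p ∧ 0 < q ∧ m * q ≤ p ∧ ∃ δ, p • γ' + δ = q • (2 • α)) ∧
      (∃ δ, γ'' + δ = α) := by
  obtain ⟨γ, hγ⟩ := h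
  have key : n • α + (α + γ) = n • α := by
    rw [add_smul, one_smul] at hγ
    rw [← add_assoc]; exact hγ
  have iter : ∀ k : ℕ, n • α + k • (α + γ) = n • α := by
    intro k
    induction k with
    | zero => simp
    | succ k ih => rw [succ_nsmul, ← add_assoc, ih]; exact key
  have main : ∃ δ, n • (2 • α) + δ = n • α := by
    refine ⟨n • γ, ?_⟩
    have := iter n
    rw [smul_add] at this
    rw [smul_smul]
    calc (n * 2) • α + n • γ = n • α + (n • α + n • γ) := by
          rw [mul_comm, mul_smul, two_smul, add_assoc]
      _ = n • α := this
  exact hcancel n hn (2 • α) α main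
end

section
/- Let (M, +, 0) be a commutative monoid with algebraic preorder ≤, let μ : M → [0, ∞] be a monoid homomorphism with μ(α) = 1, and suppose there exist β, γ ∈ M with β + γ = 2·α (so '2α \ γ' makes sense as β), β ≤ α, and 3·γ ≤ 2·α. Then we get a contradiction: μ(β) ≤ 1 while μ(β) = 2 − μ(γ) ≥ 2 − 2/3 > 1. Hence if μ exists with μ(α) = 1, then 2·α ≤₀ α fails. -/
open scoped ENNReal

/-- if `μ : M → [0,∞]` is a monoid homomorphism with `μ α = 1`, and
`β + γ = 2·α` with `β ≤ α` and `3·γ ≤ 2·α` (algebraic preorder), then we reach a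
contradiction. -/
theorem no_splitting_of_measure {M : Type*} [AddCommMonoid M]
    (μ : M →+ ℝ≥0∞) (α β γ : M) (hμ : μ α = 1)
    (hsum : β + γ = 2 • α)
    (hβ : ∃ δ, β + δ = α)
    (hγ : ∃ δ, 3 • γ + δ = 2 • α) : False := by
  obtain ⟨δ₁, h1⟩ := hβ
  obtain ⟨δ₂, h2⟩ := hγ
  have e1 : μ β + μ γ = 2 := by
    have := congrArg μ hsum
    simpa [map_add, map_nsmul, hμ] using this
  have e2 : μ β + μ δ₁ = 1 := by
    have := congrArg μ h1
    simpa [map_add, hμ] using this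
  have e3 : 3 * μ γ + μ δ₂ = 2 := by
    have := congrArg μ h2
    simpa [map_add, map_nsmul, hμ, mul_comm] using this
  have hb : μ β ≤ 1 := le_of_add_le_left e2.le
  have hg : 3 * μ γ ≤ 2 := le_of_add_le_left e3.le
  have hgle : μ γ ≤ 2 / 3 := by
    rw [ENNReal.le_div_iff_mul_le (by norm_num) (by norm_num), mul_comm]
    exact hg
  have key : (2 : ℝ≥0∞) ≤ 1 + 2 / 3 := calc (2:ℝ≥0∞) = μ β + μ γ := e1.symm
    _ ≤ 1 + 2 / 3 := add_le_add hb hgle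
  have h23 : (2 : ℝ≥0∞) / 3 < 1 := by
    rw [ENNReal.div_lt_iff (by norm_num) (by norm_num)]
    norm_num
  have h53 : (1 : ℝ≥0∞) + 2 / 3 < 2 := by
    calc (1 : ℝ≥0∞) + 2 / 3 < 1 + 1 := by exact ENNReal.add_lt_add_left ENNReal.one_ne_top h23
    _ = 2 := one_add_one_eq_two
  exact absurd key h53.not_ge
end

section
/- Let G = (A ⊔ B, E) be a finite k-regular bipartite graph (k ≥ 2) and M a matching with no 1-augmenting paths (equivalently: no edge joins two uncovered vertices). Let Y_0 be the set of uncovered vertices and Y_1 = N_G(Y_0) its neighbourhood. Then every vertex of Y_1 is covered by M, every vertex of Y_1 is adjacent to at most k−1 vertices of Y_0, and (k−1)|Y_1| ≥ k|Y_0|, i.e., |Y_1| ≥ (k/(k−1))|Y_0|. -/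
variable {V : Type*}

open scoped Classical

/-- Graph neighbourhood of a finite set of vertices. -/
noncomputable def NG [Fintype V] (G : SimpleGraph V) (S : Finset V) : Finset V :=
  Finset.univ.filter fun v => ∃ u ∈ S, G.Adj u v

/-- Set of `M`-partners of a finite set of vertices. -/
noncomputable def NM [Fintype V] (M : Set (Sym2 V)) (S : Finset V) : Finset V :=
  Finset.univ.filter fun v => ∃ u ∈ S, s(u, v) ∈ M

/-- The set of vertices not covered by `M`. -/
noncomputable def uncov [Fintype V] (M : Set (Sym2 V)) : Finset V :=
  Finset.univ.filter fun v => ¬ Covered M v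

/-- The sequence `Y_0 = ` uncovered vertices, `Y_i = N_G(Y_{i-1})` for odd `i`,
`Y_i = N_M(Y_{i-1})` for even `i > 0`. -/
noncomputable def Ychain [Fintype V] (G : SimpleGraph V) (M : Set (Sym2 V)) : ℕ → Finset V
  | 0 => uncov M
  | i + 1 => if (i + 1) % 2 = 1 then NG G (Ychain G M i) else NM M (Ychain G M i)

/-- in a finite `k`-regular bipartite graph (`k ≥ 2`), if `M` is a
matching such that no edge joins two uncovered vertices (no 1-augmenting paths),
`Y_0` is the set of uncovered vertices and `Y_1 = N_G(Y_0)`, then every vertex of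
`Y_1` is covered, every vertex of `Y_1` has at most `k-1` neighbours in `Y_0`,
and `(k-1)|Y_1| ≥ k|Y_0|`. -/
theorem one_aug_free_counting [Fintype V] [DecidableEq V]
    (G : SimpleGraph V) [DecidableRel G.Adj] (A B : Finset V)
    (hpart : ∀ v : V, v ∈ A ∨ v ∈ B) (hAB : ∀ v : V, ¬(v ∈ A ∧ v ∈ B))
    (hbip : ∀ u v : V, G.Adj u v → (u ∈ A ∧ v ∈ B) ∨ (u ∈ B ∧ v ∈ A))
    (k : ℕ) (hk : 2 ≤ k) (hreg : ∀ v : V, G.degree v = k)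
    (M : Set (Sym2 V)) (hM : IsMatching G M)
    (hno1 : ∀ u v : V, G.Adj u v → Covered M u ∨ Covered M v) :
    (∀ v ∈ NG G (uncov M), Covered M v) ∧
    (∀ v ∈ NG G (uncov M), ((uncov M).filter fun u => G.Adj v u).card ≤ k - 1) ∧
    k * (uncov M).card ≤ (k - 1) * (NG G (uncov M)).card := by
  have hcov : ∀ v ∈ NG G (uncov M), Covered M v := by
    intro v hv
    simp only [NG, Finset.mem_filter] at hv
    obtain ⟨-, u, hu, hadj⟩ := hv
    rw [uncov, Finset.mem_filter] at hu
    rcases hno1 u v hadj with h | h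
    · exact absurd h hu.2
    · exact h
  have hbound : ∀ v ∈ NG G (uncov M),
      ((uncov M).filter fun u => G.Adj v u).card ≤ k - 1 := by
    intro v hv
    obtain ⟨e, heM, hve⟩ := hcov v hv
    set w := Sym2.Mem.other hve with hw
    have hsw : s(v, w) = e := Sym2.other_spec hve
    have hswM : s(v, w) ∈ M := hsw ▸ heM
    have hwcov : Covered M w := ⟨e, heM, hsw ▸ Sym2.mem_mk_right v w⟩
    have hadjvw : G.Adj v w := hM.1 hswM
    have hsub : ((uncov M).filter fun u => G.Adj v u) ⊆ (G.neighborFinset v).erase w := by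
      intro u hu
      rw [Finset.mem_filter, uncov, Finset.mem_filter] at hu
      rw [Finset.mem_erase, SimpleGraph.mem_neighborFinset]
      refine ⟨?_, hu.2⟩
      rintro rfl
      exact hu.1.2 hwcov
    calc ((uncov M).filter fun u => G.Adj v u).card
        ≤ ((G.neighborFinset v).erase w).card := Finset.card_le_card hsub
      _ ≤ (G.neighborFinset v).card - 1 := by
          rw [Finset.card_erase_of_mem (by rwa [SimpleGraph.mem_neighborFinset])]
      _ = k - 1 := by rw [SimpleGraph.card_neighborFinset_eq_degree, hreg]
  refine ⟨hcov, hbound, ?_⟩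
  have key : ∑ u ∈ uncov M, ∑ v ∈ NG G (uncov M), (if G.Adj u v then 1 else 0)
      = ∑ v ∈ NG G (uncov M), ∑ u ∈ uncov M, (if G.Adj u v then 1 else 0) :=
    Finset.sum_comm
  have lhs : ∀ u ∈ uncov M,
      ∑ v ∈ NG G (uncov M), (if G.Adj u v then 1 else 0) = k := by
    intro u hu
    have : ((NG G (uncov M)).filter fun v => G.Adj u v) = G.neighborFinset u := by
      ext v
      simp only [Finset.mem_filter, SimpleGraph.mem_neighborFinset, NG,
        Finset.mem_univ, true_and]
      constructor
      · exact fun h => h.2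
      · exact fun h => ⟨⟨u, hu, h⟩, h⟩
    calc ∑ v ∈ NG G (uncov M), (if G.Adj u v then 1 else 0)
        = ((NG G (uncov M)).filter fun v => G.Adj u v).card := by
          rw [Finset.card_filter]
      _ = k := by rw [this, SimpleGraph.card_neighborFinset_eq_degree, hreg]
  have rhs : ∀ v ∈ NG G (uncov M),
      ∑ u ∈ uncov M, (if G.Adj u v then 1 else 0) ≤ k - 1 := by
    intro v hv
    have heq : ((uncov M).filter fun u => G.Adj u v)
        = ((uncov M).filter fun u => G.Adj v u) := by
      ext u; simp [SimpleGraph.adj_comm]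
    calc ∑ u ∈ uncov M, (if G.Adj u v then 1 else 0)
        = ((uncov M).filter fun u => G.Adj u v).card := by rw [Finset.card_filter]
      _ ≤ k - 1 := by rw [heq]; exact hbound v hv
  calc k * (uncov M).card = ∑ u ∈ uncov M, k := by
        rw [Finset.sum_const, smul_eq_mul, mul_comm]
    _ = ∑ u ∈ uncov M, ∑ v ∈ NG G (uncov M), (if G.Adj u v then 1 else 0) :=
        (Finset.sum_congr rfl lhs).symm
    _ = ∑ v ∈ NG G (uncov M), ∑ u ∈ uncov M, (if G.Adj u v then 1 else 0) := key
    _ ≤ ∑ v ∈ NG G (uncov M), (k - 1) := Finset.sum_le_sum rhs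
    _ = (k - 1) * (NG G (uncov M)).card := by
        rw [Finset.sum_const, smul_eq_mul, mul_comm]
end

section
/- Let M be a commutative monoid with algebraic preorder ≤, and α ∈ M. Suppose that for every m > 0 there exist γ', γ'' with γ' + γ'' = 2·α, p·γ' ≤ q·(2·α) for some positive integers p, q with p/q ≥ m, and γ'' ≤ α (i.e., 2·α ≤₀ α). Then there is no monoid homomorphism μ : M → [0, ∞] with μ(α) = 1. -/
open scoped ENNReal

/-- if `2·α ≤₀ α` in a commutative monoid (for every `m > 0` there
is a splitting `2·α = γ' + γ''` with `p·γ' ≤ q·(2·α)` for some positive `p, q`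
with `p/q ≥ m`, and `γ'' ≤ α`, where `≤` is the algebraic preorder), then there
is no monoid homomorphism `μ : M → [0,∞]` with `μ α = 1`. -/
theorem no_measure_of_two_le_zero {M : Type*} [AddCommMonoid M] (α : M)
    (h : ∀ m : ℕ, 0 < m → ∃ γ' γ'' : M, γ' + γ'' = 2 • α ∧
      (∃ p q : ℕ, 0 < p ∧ 0 < q ∧ m * q ≤ p ∧ ∃ δ, p • γ' + δ = q • (2 • α)) ∧
      (∃ δ, γ'' + δ = α)) :
    ¬ ∃ μ : M →+ ℝ≥0∞, μ α = 1 := by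
  rintro ⟨μ, hμ⟩
  obtain ⟨γ', γ'', hsum, ⟨p, q, hp, hq, hpq, δ, hδ⟩, ε, hε⟩ := h 3 (by norm_num)
  have h1 : μ γ' + μ γ'' = 2 := by
    have := congrArg μ hsum
    simp only [map_add, map_nsmul, hμ, nsmul_eq_mul] at this
    simpa using this
  have h2 : (p : ℝ≥0∞) * μ γ' ≤ 2 * q := by
    have := congrArg μ hδ
    simp only [map_add, map_nsmul, hμ, nsmul_eq_mul] at this
    calc (p : ℝ≥0∞) * μ γ' ≤ p * μ γ' + μ δ := le_self_add
      _ = 2 * q := by rw [this]; ring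
  have h3 : μ γ'' ≤ 1 := by
    have := congrArg μ hε
    simp only [map_add, hμ] at this
    calc μ γ'' ≤ μ γ'' + μ ε := le_self_add
      _ = 1 := this
  have hq' : (q : ℝ≥0∞) ≠ 0 := by exact_mod_cast hq.ne'
  have h4 : (3 : ℝ≥0∞) * μ γ' ≤ 2 := by
    have hle : ((3 * q : ℕ) : ℝ≥0∞) * μ γ' ≤ 2 * q := by
      refine le_trans (mul_le_mul_left ?_ _) h2
      exact_mod_cast hpq
    rw [Nat.cast_mul, Nat.cast_ofNat] at hle
    have : (q : ℝ≥0∞) * (3 * μ γ') ≤ q * 2 := by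
      calc (q : ℝ≥0∞) * (3 * μ γ') = 3 * q * μ γ' := by ring
        _ ≤ 2 * q := hle
        _ = q * 2 := by ring
    exact (ENNReal.mul_le_mul_iff_right hq' (ENNReal.natCast_ne_top q)).mp this
  have h5 : (6 : ℝ≥0∞) ≤ 5 := by
    calc (6 : ℝ≥0∞) = 3 * (μ γ' + μ γ'') := by rw [h1]; norm_num
      _ = 3 * μ γ' + 3 * μ γ'' := by ring
      _ ≤ 2 + 3 * 1 := add_le_add h4 (mul_le_mul_right h3 _)
      _ = 5 := by norm_num
  norm_num at h5
end
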